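/- Let A ∈ M_n(ℝ) with n even. Then A^{-1} exists, is a Z-matrix with A < 0 entrywise (equivalently A^{-1} is an N-matrix by the characterization A^{-1} < 0 ⟺ entrywise negative inverse), and A^{-1} has the bdsw structure, if and only if A < 0 entrywise, A has the inverse cyclic property, and d - c < 0. -/

import Mathlib

open Matrix Finset

/-- A matrix (of order ≥ 2) has the *inverse cyclic property* if all its diagonal
entries are nonzero and the three cyclic entry conditions hold. -/
def InvCyclic {n : ℕ} (A : Matrix (Fin (n + 2)) (Fin (n + 2)) ℝ) : Prop :=
  (∀ i, A i i ≠ 0) ∧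
  (∀ i k j : Fin (n + 2), i < k → k < j → A i j = A i k * A k j / A k k) ∧
  (∀ i j : Fin (n + 2), j < i → i ≠ Fin.last (n + 1) →
    A i j = A i (Fin.last (n + 1)) * A (Fin.last (n + 1)) j /
      A (Fin.last (n + 1)) (Fin.last (n + 1))) ∧
  (∀ j : Fin (n + 2), j < Fin.last (n + 1) →
    A (Fin.last (n + 1)) j = A (Fin.last (n + 1)) 0 * A 0 j / A 0 0)

/-- `d`, the product of the diagonal entries. -/
def diagProd {n : ℕ} (A : Matrix (Fin (n + 2)) (Fin (n + 2)) ℝ) : ℝ := ∏ i, A i i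

/-- `c`, the cyclic product `a₁₂a₂₃⋯a_{(n-1)n}a_{n1}`. -/
def cycProd {n : ℕ} (A : Matrix (Fin (n + 2)) (Fin (n + 2)) ℝ) : ℝ :=
  ∏ i : Fin (n + 2), A i (i + 1)
/-- A *bi-diagonal south-west* (bdsw) matrix: the diagonal, the super diagonal and the
south-west corner entry are nonzero, and all other entries are zero. -/
def Bdsw {n : ℕ} (B : Matrix (Fin (n + 2)) (Fin (n + 2)) ℝ) : Prop :=
  (∀ i, B i i ≠ 0) ∧
  (∀ i j : Fin (n + 2), (j : ℕ) = (i : ℕ) + 1 → B i j ≠ 0) ∧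
  (B (Fin.last (n + 1)) 0 ≠ 0) ∧
  (∀ i j : Fin (n + 2), i ≠ j → (j : ℕ) ≠ (i : ℕ) + 1 →
    ¬(i = Fin.last (n + 1) ∧ j = 0) → B i j = 0)

namespace Stmt11Aux
open Fin.CommRing Fin.NatCast
variable {n : ℕ}

lemma fin_one_ne_zero : (1 : Fin (n + 2)) ≠ 0 := by
  intro h
  have := congrArg Fin.val h
  simp [Fin.val_one] at this

lemma ne_sub_one (j : Fin (n + 2)) : j ≠ j - 1 := by
  intro h
  have : j - (j - 1) = (0 : Fin (n+2)) := by rw [← h]; exact sub_self j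
  rw [sub_sub_cancel] at this
  exact fin_one_ne_zero this

lemma sub_one_add_one (j : Fin (n + 2)) : j - 1 + 1 = j := by ring

lemma addval (a : Fin (n + 2)) (t : ℕ) (h : a.val + t < n + 2) :
    ((a + (t : Fin (n + 2)))).val = a.val + t := by
  rw [Fin.val_add, Fin.val_cast_of_lt (by omega), Nat.mod_eq_of_lt h]

lemma addval_wrap (a : Fin (n + 2)) (t : ℕ) (ht : t < n + 2) (h : n + 2 ≤ a.val + t) :
    ((a + (t : Fin (n + 2)))).val = a.val + t - (n + 2) := by
  rw [Fin.val_add, Fin.val_cast_of_lt ht]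
  have ha := a.isLt
  have h2 : a.val + t < 2 * (n + 2) := by omega
  rw [Nat.mod_eq_sub_mod h, Nat.mod_eq_of_lt (by omega)]

lemma cast_np1 : ((n + 1 : ℕ) : Fin (n + 2)) = -1 := by
  have h : ((n + 1 : ℕ) : Fin (n + 2)) + 1 = ((n + 2 : ℕ) : Fin (n + 2)) := by
    push_cast; ring
  rw [Fin.natCast_self] at h
  exact eq_neg_of_add_eq_zero_left h

lemma cast_succ_ne_zero (u : ℕ) (hu : u + 1 < n + 2) :
    ((u + 1 : ℕ) : Fin (n + 2)) ≠ 0 := by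
  intro h
  have := congrArg Fin.val h
  rw [Fin.val_cast_of_lt hu] at this
  simp at this

/-- Generic chain lemma: if column `j` is proportional to column `j-1` off the pivot row,
entries can be telescoped along consecutive columns. -/
lemma chainG (A : Matrix (Fin (n + 2)) (Fin (n + 2)) ℝ) (s : Fin (n + 2) → ℝ)
    (hs : ∀ j i, i ≠ j → A i j = s j * A i (j - 1)) (x j₀ : Fin (n + 2)) :
    ∀ t : ℕ, t ≤ n + 1 → (∀ u : ℕ, u < t → x ≠ j₀ + ((u + 1 : ℕ) : Fin (n + 2))) →
      A x (j₀ + (t : Fin (n + 2))) = (∏ i ∈ Finset.range t, s (j₀ + ((i + 1 : ℕ) : Fin (n + 2)))) * A x j₀ := by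
  intro t
  induction t with
  | zero => intro _ _; simp
  | succ t ih =>
    intro ht hx
    have hcol : x ≠ j₀ + ((t + 1 : ℕ) : Fin (n + 2)) := hx t (by omega)
    have step := hs (j₀ + ((t + 1 : ℕ) : Fin (n + 2))) x hcol
    have hsub : j₀ + ((t + 1 : ℕ) : Fin (n + 2)) - 1 = j₀ + ((t : ℕ) : Fin (n + 2)) := by
      push_cast
      ring
    rw [hsub] at step
    rw [step, ih (by omega) (fun u hu => hx u (by omega)), Finset.prod_range_succ]
    ring


lemma zero_sub_one : (0 : Fin (n + 2)) - 1 = Fin.last (n + 1) := by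
  rw [eq_comm, eq_sub_iff_add_eq, Fin.last_add_one]

lemma CP0 (A : Matrix (Fin (n + 2)) (Fin (n + 2)) ℝ) (hIC : InvCyclic A) :
    ∀ j i, i ≠ j → A i j * A (j - 1) (j - 1) = A i (j - 1) * A (j - 1) j := by
  obtain ⟨hd, h2, h3, h4⟩ := hIC
  intro j i hij
  by_cases hj0 : j = 0
  · subst hj0
    rw [zero_sub_one]
    by_cases hiN : i = Fin.last (n + 1)
    · rw [hiN]; ring
    · have h0i : (0 : Fin (n + 2)) < i := Fin.pos_of_ne_zero hij
      rw [h3 i 0 h0i hiN]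
      field_simp [hd (Fin.last (n + 1))]
  · obtain ⟨p, hp⟩ : ∃ p, p = j - 1 := ⟨_, rfl⟩
    rw [← hp]
    have hpval : (p : ℕ) = (j : ℕ) - 1 := by rw [hp, Fin.coe_sub_one, if_neg hj0]
    have hjval : (j : ℕ) ≠ 0 := fun h => hj0 (Fin.ext (by simp [h]))
    have hpj : p < j := by rw [Fin.lt_def]; omega
    rcases lt_trichotomy i p with hip | hip | hip
    · rw [h2 i p j hip hpj]; field_simp [hd p]
    · rw [hip]; ring
    · have hji : j < i := by
        rw [Fin.lt_def]
        have h1 : (p : ℕ) < i := hip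
        have h2' : (i : ℕ) ≠ (j : ℕ) := fun h => hij (Fin.ext h)
        omega
      have hjN : j < Fin.last (n + 1) := by
        rw [Fin.lt_def]
        have h1 : (j : ℕ) < i := hji
        have h2' := i.isLt
        simp only [Fin.val_last]
        omega
      have NC : A (Fin.last (n + 1)) j * A p p = A (Fin.last (n + 1)) p * A p j := by
        by_cases hp0 : p = 0
        · rw [hp0, h4 j hjN]
          field_simp [hd 0]
        · have hpN : p < Fin.last (n + 1) := lt_trans hpj hjN
          have h0p : (0 : Fin (n + 2)) < p := Fin.pos_of_ne_zero hp0
          rw [h4 j hjN, h4 p hpN, h2 0 p j h0p hpj]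
          field_simp [hd 0, hd p]
      by_cases hiN : i = Fin.last (n + 1)
      · rw [hiN]; exact NC
      · rw [h3 i j hji hiN, h3 i p (lt_trans hpj hji) hiN]
        field_simp [hd (Fin.last (n + 1))]
        linear_combination A i (Fin.last (n + 1)) * NC

lemma CP_div (A : Matrix (Fin (n + 2)) (Fin (n + 2)) ℝ) (hIC : InvCyclic A) :
    ∀ j i, i ≠ j → A i j = (A (j - 1) j / A (j - 1) (j - 1)) * A i (j - 1) := by
  intro j i hij
  rw [div_mul_eq_mul_div, eq_div_iff (hIC.1 (j - 1))]
  linear_combination CP0 A hIC j i hij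

lemma prod_sfun (A : Matrix (Fin (n + 2)) (Fin (n + 2)) ℝ) :
    (∏ m : Fin (n + 2), A (m - 1) m / A (m - 1) (m - 1)) = cycProd A / diagProd A := by
  rw [cycProd, diagProd, ← Finset.prod_div_distrib]
  have := Equiv.prod_comp (Equiv.addRight (1 : Fin (n + 2)))
      (fun m => A (m - 1) m / A (m - 1) (m - 1))
  rw [← this]
  apply Finset.prod_congr rfl
  intro k _
  simp [Equiv.addRight]

lemma pivot (A : Matrix (Fin (n + 2)) (Fin (n + 2)) ℝ) (hIC : InvCyclic A)
    (j : Fin (n + 2)) :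
    A j (j - 1) * A (j - 1) j * diagProd A = cycProd A * A (j - 1) (j - 1) * A j j := by
  have hd := hIC.1
  have hd0 : diagProd A ≠ 0 := by
    rw [diagProd]; exact Finset.prod_ne_zero_iff.2 fun i _ => hd i
  have hyp : ∀ u : ℕ, u < n + 1 → j ≠ j + ((u + 1 : ℕ) : Fin (n + 2)) := by
    intro u hu h
    rw [left_eq_add] at h
    exact cast_succ_ne_zero u (by omega) h
  have chain := chainG A (fun m => A (m - 1) m / A (m - 1) (m - 1))
      (fun j i h => CP_div A hIC j i h) j j (n + 1) le_rfl hyp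
  rw [cast_np1, ← sub_eq_add_neg] at chain
  set S := ∏ i ∈ Finset.range (n + 1),
      A (j + ((i + 1 : ℕ) : Fin (n + 2)) - 1) (j + ((i + 1 : ℕ) : Fin (n + 2))) /
        A (j + ((i + 1 : ℕ) : Fin (n + 2)) - 1) (j + ((i + 1 : ℕ) : Fin (n + 2)) - 1) with hSdef
  have hS : (A (j - 1) j / A (j - 1) (j - 1)) * S = cycProd A / diagProd A := by
    have e1 : (A (j - 1) j / A (j - 1) (j - 1)) * S
        = ∏ i ∈ Finset.range (n + 2),
            A (j + (i : Fin (n + 2)) - 1) (j + (i : Fin (n + 2))) /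
              A (j + (i : Fin (n + 2)) - 1) (j + (i : Fin (n + 2)) - 1) := by
      rw [Finset.prod_range_succ' (fun i =>
        A (j + (i : Fin (n + 2)) - 1) (j + (i : Fin (n + 2))) /
          A (j + (i : Fin (n + 2)) - 1) (j + (i : Fin (n + 2)) - 1)) (n + 1)]
      simp only [Nat.cast_zero, add_zero]
      ring
    rw [e1]
    rw [← Fin.prod_univ_eq_prod_range (fun i =>
        A (j + (i : Fin (n + 2)) - 1) (j + (i : Fin (n + 2))) /
          A (j + (i : Fin (n + 2)) - 1) (j + (i : Fin (n + 2)) - 1)) (n + 2)]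
    simp only [Fin.cast_val_eq_self]
    have e2 := Equiv.prod_comp (Equiv.addLeft j)
      (fun m => A (m - 1) m / A (m - 1) (m - 1))
    simp only [Equiv.coe_addLeft] at e2
    rw [e2]
    exact prod_sfun A
  rw [div_mul_eq_mul_div, div_eq_div_iff (hd (j - 1)) hd0] at hS
  rw [chain]
  linear_combination A j j * hS

/-- The candidate inverse matrix. -/
noncomputable def Bmat (A : Matrix (Fin (n + 2)) (Fin (n + 2)) ℝ) :
    Matrix (Fin (n + 2)) (Fin (n + 2)) ℝ :=
  Matrix.of fun i j =>
    if i = j then diagProd A / ((diagProd A - cycProd A) * A i i)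
    else if j = i + 1 then
      -(diagProd A * A i (i + 1)) / ((diagProd A - cycProd A) * (A i i * A (i + 1) (i + 1)))
    else 0

lemma Bmat_diag (A : Matrix (Fin (n + 2)) (Fin (n + 2)) ℝ) (j : Fin (n + 2)) :
    Bmat A j j = diagProd A / ((diagProd A - cycProd A) * A j j) := by
  simp [Bmat]

lemma Bmat_sup (A : Matrix (Fin (n + 2)) (Fin (n + 2)) ℝ) (j : Fin (n + 2)) :
    Bmat A (j - 1) j
      = -(diagProd A * A (j - 1) j) /
          ((diagProd A - cycProd A) * (A (j - 1) (j - 1) * A j j)) := by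
  have h1 : (j - 1 : Fin (n + 2)) ≠ j := Ne.symm (ne_sub_one j)
  simp only [Bmat, Matrix.of_apply, if_neg h1, sub_one_add_one, if_pos rfl, eq_self_iff_true, if_true]

lemma Bmat_zero (A : Matrix (Fin (n + 2)) (Fin (n + 2)) ℝ) (k j : Fin (n + 2))
    (h1 : k ≠ j) (h2 : k ≠ j - 1) : Bmat A k j = 0 := by
  have h3 : j ≠ k + 1 := by
    intro h
    exact h2 (by rw [h]; ring)
  simp only [Bmat, Matrix.of_apply, if_neg h1, if_neg h3]

lemma key (A : Matrix (Fin (n + 2)) (Fin (n + 2)) ℝ) (hIC : InvCyclic A)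
    (hne : diagProd A - cycProd A ≠ 0) : A * Bmat A = 1 := by
  have hd := hIC.1
  have hd0 : diagProd A ≠ 0 := by
    rw [diagProd]; exact Finset.prod_ne_zero_iff.2 fun i _ => hd i
  ext i j
  rw [Matrix.mul_apply, Matrix.one_apply]
  have hsplit : ∀ k, A i k * Bmat A k j
      = (if k = j then A i j * Bmat A j j else 0)
        + (if k = j - 1 then A i (j - 1) * Bmat A (j - 1) j else 0) := by
    intro k
    by_cases h1 : k = j
    · subst h1
      rw [if_pos rfl, if_neg (ne_sub_one k), add_zero]
    · rw [if_neg h1]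
      by_cases h2 : k = j - 1
      · subst h2
        rw [if_pos rfl, zero_add]
      · rw [if_neg h2, Bmat_zero A k j h1 h2, mul_zero, add_zero]
  rw [Finset.sum_congr rfl (fun k _ => hsplit k), Finset.sum_add_distrib,
    Finset.sum_ite_eq' Finset.univ j, Finset.sum_ite_eq' Finset.univ (j - 1)]
  simp only [Finset.mem_univ, if_true]
  rw [Bmat_diag, Bmat_sup]
  by_cases hij : i = j
  · subst hij
    rw [if_pos rfl]
    have piv := pivot A hIC i
    field_simp [hne, hd i, hd (i - 1)]
    linear_combination -piv
  · rw [if_neg hij]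
    have cp := CP0 A hIC j i hij
    field_simp [hne, hd j, hd (j - 1)]
    linear_combination diagProd A * cp

lemma prod_neg_pos (hn : Even (n + 2)) (f : Fin (n + 2) → ℝ) (h : ∀ i, f i < 0) :
    0 < ∏ i, f i := by
  have e : ∏ i : Fin (n + 2), f i = (-1 : ℝ) ^ (n + 2) * ∏ i, -f i := by
    calc ∏ i : Fin (n + 2), f i = ∏ i : Fin (n + 2), (-1 : ℝ) * (-f i) :=
          Finset.prod_congr rfl fun i _ => by ring
      _ = (∏ _i : Fin (n + 2), (-1 : ℝ)) * ∏ i, -f i := Finset.prod_mul_distrib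
      _ = (-1 : ℝ) ^ (n + 2) * ∏ i, -f i := by
          rw [Finset.prod_const, Finset.card_univ, Fintype.card_fin]
  rw [e, hn.neg_one_pow, one_mul]
  exact Finset.prod_pos fun i _ => by linarith [h i]

lemma dpos (hn : Even (n + 2)) (A : Matrix (Fin (n + 2)) (Fin (n + 2)) ℝ)
    (hneg : ∀ i j, A i j < 0) : 0 < diagProd A :=
  prod_neg_pos hn _ fun i => hneg i i

lemma Bmat_sup_neg (hn : Even (n + 2)) (A : Matrix (Fin (n + 2)) (Fin (n + 2)) ℝ)
    (hneg : ∀ i j, A i j < 0) (hdc : diagProd A - cycProd A < 0) (j : Fin (n + 2)) :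
    Bmat A (j - 1) j < 0 := by
  rw [Bmat_sup]
  apply div_neg_of_pos_of_neg
  · have := hneg (j - 1) j
    nlinarith [dpos hn A hneg]
  · have h1 := mul_pos_of_neg_of_neg (hneg (j - 1) (j - 1)) (hneg j j)
    exact mul_neg_of_neg_of_pos hdc h1

lemma Bmat_diag_pos (hn : Even (n + 2)) (A : Matrix (Fin (n + 2)) (Fin (n + 2)) ℝ)
    (hneg : ∀ i j, A i j < 0) (hdc : diagProd A - cycProd A < 0) (j : Fin (n + 2)) :
    0 < Bmat A j j := by
  rw [Bmat_diag]
  exact div_pos (dpos hn A hneg) (mul_pos_of_neg_of_neg hdc (hneg j j))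

lemma eq_sub_one_of_nat_succ {i j : Fin (n + 2)} (h : (j : ℕ) = (i : ℕ) + 1) :
    i = j - 1 := by
  have hj : j = i + 1 := by
    apply Fin.ext
    rw [Fin.val_add, Fin.val_one, Nat.mod_eq_of_lt]
    · omega
    · have := j.isLt; omega
  rw [hj]; ring

lemma sub_one_cases {i j : Fin (n + 2)} (h : i = j - 1) :
    (j : ℕ) = (i : ℕ) + 1 ∨ (i = Fin.last (n + 1) ∧ j = 0) := by
  by_cases hj : j = 0
  · right
    refine ⟨?_, hj⟩
    rw [h, hj, zero_sub_one]
  · left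
    have := Fin.coe_sub_one j
    rw [if_neg hj] at this
    have hjv : (j : ℕ) ≠ 0 := fun hh => hj (Fin.ext (by simp [hh]))
    rw [h, this]
    omega

lemma backward (hn : Even (n + 2)) (A : Matrix (Fin (n + 2)) (Fin (n + 2)) ℝ)
    (hneg : ∀ i j, A i j < 0) (hIC : InvCyclic A)
    (hdc : diagProd A - cycProd A < 0) :
    A.det ≠ 0 ∧ (∀ i j, i ≠ j → A⁻¹ i j ≤ 0) ∧ (∀ i j, A i j < 0) ∧ Bdsw A⁻¹ := by
  have hone := key A hIC (ne_of_lt hdc)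
  have hdet : A.det ≠ 0 := by
    have := congrArg Matrix.det hone
    rw [Matrix.det_mul, Matrix.det_one] at this
    exact left_ne_zero_of_mul_eq_one this
  have hinv : A⁻¹ = Bmat A := Matrix.inv_eq_right_inv hone
  rw [hinv]
  refine ⟨hdet, ?_, hneg, ?_, ?_, ?_, ?_⟩
  · intro i j hij
    by_cases h : i = j - 1
    · rw [h]; exact le_of_lt (Bmat_sup_neg hn A hneg hdc j)
    · rw [Bmat_zero A i j hij h]
  · intro i
    exact ne_of_gt (Bmat_diag_pos hn A hneg hdc i)
  · intro i j h
    rw [eq_sub_one_of_nat_succ h]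
    exact ne_of_lt (Bmat_sup_neg hn A hneg hdc j)
  · rw [show Fin.last (n + 1) = (0 : Fin (n + 2)) - 1 from zero_sub_one.symm]
    exact ne_of_lt (Bmat_sup_neg hn A hneg hdc 0)
  · intro i j hij hsucc hcorner
    apply Bmat_zero A i j hij
    intro h
    rcases sub_one_cases h with h1 | h1
    · exact hsucc h1
    · exact hcorner h1

lemma forward (hn : Even (n + 2)) (A : Matrix (Fin (n + 2)) (Fin (n + 2)) ℝ)
    (hdet : A.det ≠ 0) (hZ : ∀ i j, i ≠ j → A⁻¹ i j ≤ 0)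
    (hneg : ∀ i j, A i j < 0) (hB : Bdsw A⁻¹) :
    InvCyclic A ∧ diagProd A - cycProd A < 0 := by
  obtain ⟨hB1, hB2, hB3, hB4⟩ := hB
  set B := A⁻¹ with hBdef
  have hone : A * B = 1 := Matrix.mul_nonsing_inv A (Ne.isUnit hdet)
  have hBz : ∀ k j : Fin (n + 2), k ≠ j → k ≠ j - 1 → B k j = 0 := by
    intro k j h1 h2
    apply hB4 k j h1
    · intro hs; exact h2 (eq_sub_one_of_nat_succ hs)
    · rintro ⟨hk, hj⟩
      exact h2 (by rw [hk, hj, zero_sub_one])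
  have hrel : ∀ i j : Fin (n + 2),
      A i j * B j j + A i (j - 1) * B (j - 1) j = if i = j then 1 else 0 := by
    intro i j
    have hone' : (A * B) i j = if i = j then 1 else 0 := by rw [hone, Matrix.one_apply]
    rw [Matrix.mul_apply] at hone'
    have hsplit : ∀ k, A i k * B k j
        = (if k = j then A i j * B j j else 0)
          + (if k = j - 1 then A i (j - 1) * B (j - 1) j else 0) := by
      intro k
      by_cases h1 : k = j
      · subst h1
        rw [if_pos rfl, if_neg (ne_sub_one k), add_zero]
      · rw [if_neg h1]
        by_cases h2 : k = j - 1
        · subst h2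
          rw [if_pos rfl, zero_add]
        · rw [if_neg h2, hBz k j h1 h2, mul_zero, add_zero]
    rw [Finset.sum_congr rfl (fun k _ => hsplit k), Finset.sum_add_distrib,
      Finset.sum_ite_eq' Finset.univ j, Finset.sum_ite_eq' Finset.univ (j - 1)] at hone'
    simpa using hone'
  have hCP : ∀ j i : Fin (n + 2), i ≠ j →
      A i j = (-(B (j - 1) j) / B j j) * A i (j - 1) := by
    intro j i hij
    rw [div_mul_eq_mul_div, eq_div_iff (hB1 j)]
    have := hrel i j
    rw [if_neg hij] at this
    linear_combination this
  have chain := chainG A (fun m => -(B (m - 1) m) / B m m) hCP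
  have hd : ∀ i : Fin (n + 2), A i i ≠ 0 := fun i => ne_of_lt (hneg i i)
  have hv0 : ((0 : Fin (n + 2)) : ℕ) = 0 := rfl
  have hIC : InvCyclic A := by
    refine ⟨hd, ?_, ?_, ?_⟩
    · -- upper entries
      intro i k j hik hkj
      have hik' : (i : ℕ) < k := hik
      have hkj' : (k : ℕ) < j := hkj
      have hjlt := j.isLt
      set t := (j : ℕ) - (k : ℕ) with htdef
      have hj : k + ((t : ℕ) : Fin (n + 2)) = j := by
        apply Fin.ext
        rw [addval k t (by omega)]
        omega
      have hcol : ∀ u : ℕ, u < t → (k + ((u + 1 : ℕ) : Fin (n + 2))).val = (k : ℕ) + u + 1 := by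
        intro u hu
        rw [addval k (u + 1) (by omega)]
        omega
      have c1 := chain i k t (by omega) (fun u hu h => by
        have hval := congrArg Fin.val h
        rw [hcol u hu] at hval
        omega)
      have c2 := chain k k t (by omega) (fun u hu h => by
        have hval := congrArg Fin.val h
        rw [hcol u hu] at hval
        omega)
      rw [hj] at c1 c2
      have hS : (∏ x ∈ Finset.range t,
          -B (k + ((x + 1 : ℕ) : Fin (n + 2)) - 1) (k + ((x + 1 : ℕ) : Fin (n + 2))) /
            B (k + ((x + 1 : ℕ) : Fin (n + 2))) (k + ((x + 1 : ℕ) : Fin (n + 2))))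
          = A k j / A k k := by
        rw [eq_div_iff (hd k)]
        linear_combination -c2
      rw [c1, hS]
      ring
    · -- lower entries
      intro i j hji hiNe
      have hji' : (j : ℕ) < i := hji
      have hilt := i.isLt
      have hiN : (i : ℕ) < n + 1 := by
        rcases Nat.lt_or_ge (i : ℕ) (n + 1) with h | h
        · exact h
        · exact absurd (Fin.ext (show (i : ℕ) = n + 1 by omega)) hiNe
      set t := (j : ℕ) + 1 with htdef
      have hlastval : ((Fin.last (n + 1) : Fin (n + 2)) : ℕ) = n + 1 := rfl
      have hj : Fin.last (n + 1) + ((t : ℕ) : Fin (n + 2)) = j := by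
        apply Fin.ext
        rw [addval_wrap (Fin.last (n + 1)) t (by omega) (by rw [hlastval]; omega), hlastval]
        omega
      have hcol : ∀ u : ℕ, u < t →
          (Fin.last (n + 1) + ((u + 1 : ℕ) : Fin (n + 2))).val = u := by
        intro u hu
        rw [addval_wrap (Fin.last (n + 1)) (u + 1) (by omega) (by rw [hlastval]; omega), hlastval]
        omega
      have c1 := chain i (Fin.last (n + 1)) t (by omega) (fun u hu h => by
        have hval := congrArg Fin.val h
        rw [hcol u hu] at hval
        omega)
      have c2 := chain (Fin.last (n + 1)) (Fin.last (n + 1)) t (by omega) (fun u hu h => by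
        have hval := congrArg Fin.val h
        rw [hcol u hu] at hval
        rw [hlastval] at hval
        omega)
      rw [hj] at c1 c2
      have hS : (∏ x ∈ Finset.range t,
          -B (Fin.last (n + 1) + ((x + 1 : ℕ) : Fin (n + 2)) - 1)
              (Fin.last (n + 1) + ((x + 1 : ℕ) : Fin (n + 2))) /
            B (Fin.last (n + 1) + ((x + 1 : ℕ) : Fin (n + 2)))
              (Fin.last (n + 1) + ((x + 1 : ℕ) : Fin (n + 2))))
          = A (Fin.last (n + 1)) j / A (Fin.last (n + 1)) (Fin.last (n + 1)) := by
        rw [eq_div_iff (hd (Fin.last (n + 1)))]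
        linear_combination -c2
      rw [c1, hS]
      ring
    · -- last row
      intro j hjN
      have hjN' : (j : ℕ) < n + 1 := hjN
      set t := (j : ℕ) with htdef
      have hj : (0 : Fin (n + 2)) + ((t : ℕ) : Fin (n + 2)) = j := by
        apply Fin.ext
        rw [addval 0 t (by rw [hv0]; omega), hv0]
        omega
      have hcol : ∀ u : ℕ, u < t →
          ((0 : Fin (n + 2)) + ((u + 1 : ℕ) : Fin (n + 2))).val = u + 1 := by
        intro u hu
        rw [addval 0 (u + 1) (by rw [hv0]; omega), hv0]
        omega
      have c1 := chain (Fin.last (n + 1)) 0 t (by omega) (fun u hu h => by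
        have hval := congrArg Fin.val h
        rw [hcol u hu] at hval
        have : ((Fin.last (n + 1) : Fin (n + 2)) : ℕ) = n + 1 := rfl
        omega)
      have c2 := chain 0 0 t (by omega) (fun u hu h => by
        have hval := congrArg Fin.val h
        rw [hcol u hu] at hval
        rw [hv0] at hval
        omega)
      rw [hj] at c1 c2
      have hS : (∏ x ∈ Finset.range t,
          -B ((0 : Fin (n + 2)) + ((x + 1 : ℕ) : Fin (n + 2)) - 1)
              ((0 : Fin (n + 2)) + ((x + 1 : ℕ) : Fin (n + 2))) /
            B ((0 : Fin (n + 2)) + ((x + 1 : ℕ) : Fin (n + 2)))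
              ((0 : Fin (n + 2)) + ((x + 1 : ℕ) : Fin (n + 2))))
          = A 0 j / A 0 0 := by
        rw [eq_div_iff (hd 0)]
        linear_combination -c2
      rw [c1, hS]
      ring
  refine ⟨hIC, ?_⟩
  have hd0 : diagProd A ≠ 0 := by
    rw [diagProd]; exact Finset.prod_ne_zero_iff.2 fun i _ => hd i
  have hne : diagProd A - cycProd A ≠ 0 := by
    intro heq
    have heq' : diagProd A = cycProd A := by linarith [sub_eq_zero.1 heq]
    set v : Fin (n + 2) → ℝ := fun k =>
      (if k = 0 then A 0 1 else 0) + (if k = 1 then -(A 0 0) else 0) with hvdef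
    have hvne : v ≠ 0 := by
      intro h
      have h1 : v 1 = 0 := congrFun h 1
      rw [hvdef] at h1
      simp only [if_neg fin_one_ne_zero, if_pos rfl, zero_add] at h1
      exact hd 0 (neg_eq_zero.1 h1)
    have hmv : A.mulVec v = 0 := by
      funext i
      have hexp : A.mulVec v i = A i 0 * A 0 1 + A i 1 * -(A 0 0) := by
        rw [Matrix.mulVec, dotProduct]
        have hsplit : ∀ k, A i k * v k
            = (if k = 0 then A i 0 * A 0 1 else 0)
              + (if k = 1 then A i 1 * -(A 0 0) else 0) := by
          intro k
          by_cases h1 : k = (0 : Fin (n + 2))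
          · subst h1
            simp [hvdef, fin_one_ne_zero.symm]
          · by_cases h2 : k = 1
            · subst h2
              simp [hvdef, fin_one_ne_zero]
            · simp [hvdef, h1, h2]
        rw [Finset.sum_congr rfl (fun k _ => hsplit k), Finset.sum_add_distrib,
          Finset.sum_ite_eq' Finset.univ (0 : Fin (n + 2)),
          Finset.sum_ite_eq' Finset.univ (1 : Fin (n + 2))]
        simp
      rw [hexp]
      by_cases hi1 : i = 1
      · subst hi1
        have piv := pivot A hIC 1
        rw [sub_self, ← heq'] at piv
        have h5 : A 1 0 * A 0 1 = A 0 0 * A 1 1 := by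
          apply mul_right_cancel₀ hd0
          linear_combination piv
        simp only [Pi.zero_apply]
        linear_combination h5
      · have cp := CP0 A hIC 1 i hi1
        rw [sub_self] at cp
        simp only [Pi.zero_apply]
        linear_combination -cp
    exact hdet (Matrix.exists_mulVec_eq_zero_iff.1 ⟨v, hvne, hmv⟩)
  have hinv : A⁻¹ = Bmat A := Matrix.inv_eq_right_inv (key A hIC hne)
  have hsign := hZ 0 1 (Ne.symm fin_one_ne_zero)
  rw [hBdef, hinv] at hsign
  have hB01 : Bmat A 0 1 = -(diagProd A * A 0 1) /
      ((diagProd A - cycProd A) * (A 0 0 * A 1 1)) := by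
    have h6 := Bmat_sup A 1
    rw [sub_self] at h6
    exact h6
  rw [hB01] at hsign
  rcases lt_or_gt_of_ne hne with h | h
  · exact h
  · exfalso
    have hnum : 0 < -(diagProd A * A 0 1) := by
      nlinarith [dpos hn A hneg, hneg 0 1]
    have hden : 0 < (diagProd A - cycProd A) * (A 0 0 * A 1 1) :=
      mul_pos h (mul_pos_of_neg_of_neg (hneg 0 0) (hneg 1 1))
    nlinarith [div_pos hnum hden]

end Stmt11Aux

theorem stmt11 {n : ℕ} (hn : Even (n + 2)) (A : Matrix (Fin (n + 2)) (Fin (n + 2)) ℝ) :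
    -- `A` is an inverse `N`-matrix (i.e. `A⁻¹` is a nonsingular `Z`-matrix whose
    -- inverse `A` is entrywise negative) such that `A⁻¹` has the bdsw structure
    (A.det ≠ 0 ∧ (∀ i j, i ≠ j → A⁻¹ i j ≤ 0) ∧ (∀ i j, A i j < 0) ∧ Bdsw A⁻¹) ↔
    ((∀ i j, A i j < 0) ∧ InvCyclic A ∧ diagProd A - cycProd A < 0) := by
  constructor
  · rintro ⟨hdet, hZ, hneg, hB⟩
    obtain ⟨hIC, hdc⟩ := Stmt11Aux.forward hn A hdet hZ hneg hB
    exact ⟨hneg, hIC, hdc⟩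
  · rintro ⟨hneg, hIC, hdc⟩
    exact Stmt11Aux.backward hn A hneg hIC hdc
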